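/- arXiv:1810.01726 — 5 statements merged into one kernel-verified Lean document; each statement's English description precedes it below -/
import Mathlib

section
/- If a DFS tree T undergoes k vertex or edge failures, and k' is the maximum number of failures on any single root-to-leaf path of T, then the updated shallow tree (rebuilt over the refined path decomposition after failures) has height at most k' + log₂ n. -/
open Classical Finset

structure RTree (V : Type*) where
  parent : V → V
  root : V
  parent_root : parent root = root
  reaches : ∀ v : V, ∃ k : ℕ, parent^[k] v = root

namespace RTree

variable {V : Type*}

/-- `u` is an ancestor of `v` (or `u = v`) in the rooted tree `T`. -/
def IsAncestor (T : RTree V) (u v : V) : Prop :=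
  ∃ k : ℕ, T.parent^[k] v = u

/-- depth of a vertex: distance (number of edges) from the root. -/
noncomputable def depth (T : RTree V) (v : V) : ℕ :=
  Nat.find (T.reaches v)

/-- number of vertices in the subtree rooted at `v`. -/
noncomputable def subtreeSize [Fintype V] (T : RTree V) (v : V) : ℕ :=
  (Finset.univ.filter fun u => T.IsAncestor v u).card

end RTree

/-- A heavy-light decomposition of a rooted tree: `heavy c` means the edge
from `parent c` to `c` is marked heavy (solid). -/
structure HLDecomp {V : Type*} [Fintype V] (T : RTree V) where
  heavy : V → Prop
  heavy_ne_root : ∀ c, heavy c → c ≠ T.root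
  heavy_max : ∀ c c', heavy c → T.parent c' = T.parent c → c' ≠ T.parent c' →
      T.subtreeSize c' ≤ T.subtreeSize c
  heavy_exists : ∀ u : V, (∃ c, T.parent c = u ∧ c ≠ u) → ∃ c, T.parent c = u ∧ c ≠ u ∧ heavy c
  heavy_unique : ∀ c c', heavy c → heavy c' → T.parent c = T.parent c' → c = c'

/-- number of light (dashed) edges on the tree path from the root to `v`. -/
noncomputable def lightCount {V : Type*} [Fintype V] (T : RTree V) (H : HLDecomp T) (v : V) : ℕ :=
  (Finset.univ.filter fun u => T.IsAncestor u v ∧ u ≠ T.root ∧ ¬ H.heavy u).card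

namespace RTree
variable {V : Type*} (T : RTree V)

lemma iterate_root (k : ℕ) : T.parent^[k] T.root = T.root := by
  induction k with
  | zero => rfl
  | succ n ih => rw [Function.iterate_succ_apply', ih, T.parent_root]

lemma anc_refl (v : V) : T.IsAncestor v v := ⟨0, rfl⟩

lemma anc_parent {u w : V} (h : T.IsAncestor u w) : T.IsAncestor (T.parent u) w := by
  obtain ⟨k, hk⟩ := h
  exact ⟨k + 1, by rw [Function.iterate_succ_apply', hk]⟩

lemma depth_spec (v : V) : T.parent^[T.depth v] v = T.root := Nat.find_spec (T.reaches v)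

lemma depth_min {v : V} {i : ℕ} (h : i < T.depth v) : T.parent^[i] v ≠ T.root :=
  Nat.find_min (T.reaches v) h

lemma iterate_inj {v : V} {i j : ℕ} (hi : i ≤ T.depth v) (hj : j ≤ T.depth v)
    (h : T.parent^[i] v = T.parent^[j] v) : i = j := by
  wlog hle : i ≤ j generalizing i j
  · exact (this hj hi h.symm (le_of_not_ge hle)).symm
  by_contra hne
  have hij : i < j := lt_of_le_of_ne hle hne
  have : T.parent^[T.depth v - j + i] v = T.root := by
    have := congrArg (T.parent^[T.depth v - j]) h
    rw [← Function.iterate_add_apply, ← Function.iterate_add_apply] at this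
    rwa [show T.depth v - j + j = T.depth v by omega, T.depth_spec] at this
  exact T.depth_min (by omega) this

lemma fix_root {w : V} {m : ℕ} (hm : 0 < m) (h : T.parent^[m] w = w) : w = T.root := by
  obtain ⟨K, hK⟩ := T.reaches w
  have hmK : ∀ j : ℕ, T.parent^[m * j] w = w := by
    intro j
    induction j with
    | zero => rfl
    | succ n ih => rw [Nat.mul_succ, Function.iterate_add_apply, h, ih]
  have h1 : T.parent^[m * K] w = w := hmK K
  have h2 : T.parent^[m * K] w = T.root := by
    have hge : K ≤ m * K := Nat.le_mul_of_pos_left K hm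
    rw [show m * K = (m * K - K) + K by omega, Function.iterate_add_apply, hK, T.iterate_root]
  rw [← h1, h2]

lemma anc_index {u v : V} (h : T.IsAncestor u v) : ∃ i ≤ T.depth v, T.parent^[i] v = u := by
  obtain ⟨i, hi⟩ := h
  rcases le_or_gt i (T.depth v) with hle | hlt
  · exact ⟨i, hle, hi⟩
  · refine ⟨T.depth v, le_rfl, ?_⟩
    rw [T.depth_spec]
    rw [show i = (i - T.depth v) + T.depth v by omega, Function.iterate_add_apply,
      T.depth_spec, T.iterate_root] at hi
    exact hi

lemma nonroot_ne_parent {u : V} (h : u ≠ T.root) : u ≠ T.parent u := by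
  intro he
  exact h (T.fix_root (m := 1) one_pos (by simpa using he.symm))

lemma subtreeSize_pos [Fintype V] (v : V) : 1 ≤ T.subtreeSize v :=
  Finset.card_pos.2 ⟨v, by simp [T.anc_refl]⟩

lemma subtreeSize_le_parent [Fintype V] (v : V) : T.subtreeSize v ≤ T.subtreeSize (T.parent v) := by
  apply Finset.card_le_card
  intro w hw
  simp only [Finset.mem_filter, Finset.mem_univ, true_and] at hw ⊢
  exact T.anc_parent hw

lemma subtreeSize_le_card [Fintype V] (v : V) : T.subtreeSize v ≤ Fintype.card V :=
  (Finset.card_filter_le _ _).trans (le_of_eq Finset.card_univ)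

/-- no two distinct non-root siblings can be ancestor-related. -/
lemma sibling_not_anc {x y : V} (hxr : x ≠ T.root) (hpar : T.parent x = T.parent y)
    {m : ℕ} (hm : 0 < m) (hmx : T.parent^[m] y = x) : False := by
  have h1 : T.parent^[m] (T.parent y) = T.parent y := by
    have h : T.parent x = T.parent^[m + 1] y := by
      rw [← hmx]; exact (Function.iterate_succ_apply' _ _ _).symm
    rw [Function.iterate_succ_apply] at h
    rw [← h, hpar]
  have hroot : T.parent y = T.root := T.fix_root hm h1
  obtain ⟨m', rfl⟩ : ∃ m', m = m' + 1 := ⟨m - 1, by omega⟩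
  rw [Function.iterate_succ_apply, hroot, T.iterate_root] at hmx
  exact hxr hmx.symm

end RTree

section Doubling
variable {V : Type*} [Fintype V] {T : RTree V}

lemma light_doubling (H : HLDecomp T) {u : V} (hur : u ≠ T.root) (hl : ¬ H.heavy u) :
    2 * T.subtreeSize u ≤ T.subtreeSize (T.parent u) := by
  have hup : u ≠ T.parent u := T.nonroot_ne_parent hur
  obtain ⟨c, hc1, hc2, hc3⟩ := H.heavy_exists (T.parent u) ⟨u, rfl, hup⟩
  have hcu : c ≠ u := fun h => hl (h ▸ hc3)
  have hsize : T.subtreeSize u ≤ T.subtreeSize c := H.heavy_max c u hc3 hc1.symm hup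
  have hcr : c ≠ T.root := H.heavy_ne_root c hc3
  have hdisj : Disjoint (Finset.univ.filter fun w => T.IsAncestor u w)
      (Finset.univ.filter fun w => T.IsAncestor c w) := by
    rw [Finset.disjoint_left]
    intro w hw1 hw2
    simp only [Finset.mem_filter, Finset.mem_univ, true_and] at hw1 hw2
    obtain ⟨a, ha⟩ := hw1
    obtain ⟨b, hb⟩ := hw2
    rcases le_or_gt a b with hab | hab
    · -- c = parent^[b-a] u
      have : T.parent^[b - a] u = c := by
        rw [← ha, ← Function.iterate_add_apply, show b - a + a = b by omega, hb]
      rcases Nat.eq_zero_or_pos (b - a) with h0 | h0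
      · rw [h0, Function.iterate_zero_apply] at this; exact hcu this.symm
      · exact T.sibling_not_anc hcr hc1 h0 this
    · have : T.parent^[a - b] c = u := by
        rw [← hb, ← Function.iterate_add_apply, show a - b + b = a by omega, ha]
      exact T.sibling_not_anc hur hc1.symm (by omega) this
  have hsub : (Finset.univ.filter fun w => T.IsAncestor u w) ∪
      (Finset.univ.filter fun w => T.IsAncestor c w) ⊆
      Finset.univ.filter fun w => T.IsAncestor (T.parent u) w := by
    intro w hw
    simp only [Finset.mem_union, Finset.mem_filter, Finset.mem_univ, true_and] at hw ⊢
    rcases hw with h | h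
    · exact T.anc_parent h
    · rw [← hc1]; exact T.anc_parent h
  calc 2 * T.subtreeSize u = T.subtreeSize u + T.subtreeSize u := two_mul _
    _ ≤ T.subtreeSize u + T.subtreeSize c := by omega
    _ = ((Finset.univ.filter fun w => T.IsAncestor u w) ∪
        (Finset.univ.filter fun w => T.IsAncestor c w)).card :=
        (Finset.card_union_of_disjoint hdisj).symm
    _ ≤ T.subtreeSize (T.parent u) := Finset.card_le_card hsub

lemma pow_light_le (H : HLDecomp T) (v : V) :
    2 ^ (((Finset.range (T.depth v + 1)).filter fun i =>
        T.parent^[i] v ≠ T.root ∧ ¬ H.heavy (T.parent^[i] v)).card) ≤ Fintype.card V := by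
  have key : ∀ j : ℕ, 2 ^ (((Finset.range j).filter fun i =>
      T.parent^[i] v ≠ T.root ∧ ¬ H.heavy (T.parent^[i] v)).card) ≤
      T.subtreeSize (T.parent^[j] v) := by
    intro j
    induction j with
    | zero => simpa using T.subtreeSize_pos v
    | succ n ih =>
      rw [Finset.range_add_one, Finset.filter_insert]
      by_cases hP : T.parent^[n] v ≠ T.root ∧ ¬ H.heavy (T.parent^[n] v)
      · rw [if_pos hP, Finset.card_insert_of_notMem (by simp)]
        have hd := light_doubling H hP.1 hP.2
        rw [Function.iterate_succ_apply']
        calc 2 ^ (_ + 1) = 2 * 2 ^ _ := by ring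
          _ ≤ 2 * T.subtreeSize (T.parent^[n] v) := by omega
          _ ≤ _ := hd
      · rw [if_neg hP]
        rw [Function.iterate_succ_apply']
        exact ih.trans (T.subtreeSize_le_parent _)
  exact (key (T.depth v + 1)).trans (T.subtreeSize_le_card _)

end Doubling

/-- If a DFS tree `T` on `n` vertices undergoes `k` vertex or edge
failures, and `k'` is the maximum number of failures on any single root-to-leaf path of
`T`, then the updated shallow tree (rebuilt over the refined path decomposition after
failures) has height at most `k' + log₂ n`.

Modelling: each failure marks a vertex of `F` (a failed vertex itself, or the lower
endpoint of a failed tree edge); the hypothesis `hk'` says every root-to-leaf path of `T`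
carries at most `k'` failures.  After the failures, a surviving vertex `u` is the top of a
path of the refined decomposition iff `u` is the root, or its parent edge is light, or its
parent failed.  The depth in the updated shallow tree of the node containing a surviving
vertex `v` is the number of such tops on the root-to-`v` path minus one, and we bound it
by `k' + log₂ n`. -/
theorem shallow_tree_height_after_failures {V : Type*} [Fintype V]
    (T : RTree V) (H : HLDecomp T) (F : Finset V) (k' : ℕ)
    (hk' : ∀ v : V, (Finset.univ.filter fun u => T.IsAncestor u v ∧ u ∈ F).card ≤ k') :
    ∀ v : V, v ∉ F →
      ((Finset.univ.filter fun u => T.IsAncestor u v ∧ u ∉ F ∧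
          (u = T.root ∨ ¬ H.heavy u ∨ T.parent u ∈ F)).card : ℝ) - 1
        ≤ k' + Real.logb 2 (Fintype.card V) := by
  intro v hv
  set A := Finset.univ.filter fun u => T.IsAncestor u v ∧ u ∉ F ∧
      (u = T.root ∨ ¬ H.heavy u ∨ T.parent u ∈ F) with hA
  set A1 := Finset.univ.filter fun u : V => T.IsAncestor u v ∧ T.parent u ∈ F ∧ u ∉ F with hA1
  set A2 := Finset.univ.filter fun u : V => T.IsAncestor u v ∧ u ≠ T.root ∧ ¬ H.heavy u with hA2
  -- A ⊆ A1 ∪ A2 ∪ {root}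
  have hsub : A ⊆ A1 ∪ A2 ∪ {T.root} := by
    intro u hu
    simp only [hA, Finset.mem_filter, Finset.mem_univ, true_and] at hu
    obtain ⟨hanc, huF, hcase⟩ := hu
    simp only [Finset.mem_union, Finset.mem_singleton, hA1, hA2, Finset.mem_filter,
      Finset.mem_univ, true_and]
    by_cases hur : u = T.root
    · exact Or.inr hur
    rcases hcase with h | h | h
    · exact absurd h hur
    · exact Or.inl (Or.inr ⟨hanc, hur, h⟩)
    · exact Or.inl (Or.inl ⟨hanc, h, huF⟩)
  have hcardA : A.card ≤ A1.card + A2.card + 1 := by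
    calc A.card ≤ (A1 ∪ A2 ∪ {T.root}).card := Finset.card_le_card hsub
      _ ≤ (A1 ∪ A2).card + ({T.root} : Finset V).card := Finset.card_union_le _ _
      _ ≤ A1.card + A2.card + 1 := by
          have := Finset.card_union_le A1 A2
          simp only [Finset.card_singleton]
          omega
  -- A1.card ≤ k'
  have hA1card : A1.card ≤ k' := by
    refine le_trans ?_ (hk' v)
    apply Finset.card_le_card_of_injOn T.parent
    · intro u hu
      simp only [hA1, Finset.mem_coe, Finset.mem_filter, Finset.mem_univ, true_and] at hu ⊢
      exact ⟨T.anc_parent hu.1, hu.2.1⟩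
    · intro u1 h1 u2 h2 hpar
      simp only [hA1, Finset.coe_filter, Set.mem_setOf_eq, Finset.mem_univ, true_and] at h1 h2
      have hr1 : u1 ≠ T.root := by
        rintro rfl; rw [T.parent_root] at h1; exact h1.2.2 h1.2.1
      have hr2 : u2 ≠ T.root := by
        rintro rfl; rw [T.parent_root] at h2; exact h2.2.2 h2.2.1
      obtain ⟨i, hi, hiu⟩ := T.anc_index h1.1
      obtain ⟨j, hj, hju⟩ := T.anc_index h2.1
      have hi' : i < T.depth v := by
        rcases lt_or_eq_of_le hi with h | h
        · exact h
        · exact absurd (by rw [← hiu, h]; exact T.depth_spec v) hr1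
      have hj' : j < T.depth v := by
        rcases lt_or_eq_of_le hj with h | h
        · exact h
        · exact absurd (by rw [← hju, h]; exact T.depth_spec v) hr2
      have : T.parent^[i + 1] v = T.parent^[j + 1] v := by
        rw [Function.iterate_succ_apply', Function.iterate_succ_apply', hiu, hju]
        exact hpar
      have hij := T.iterate_inj (by omega) (by omega) this
      obtain rfl : i = j := by omega
      rw [← hiu, ← hju]
  -- A2.card equals the light-index count
  have hA2eq : A2.card = ((Finset.range (T.depth v + 1)).filter fun i =>
      T.parent^[i] v ≠ T.root ∧ ¬ H.heavy (T.parent^[i] v)).card := by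
    rw [eq_comm]
    apply Finset.card_bij (fun i _ => T.parent^[i] v)
    · intro i hi
      simp only [Finset.mem_filter, Finset.mem_range] at hi
      simp only [hA2, Finset.mem_filter, Finset.mem_univ, true_and]
      exact ⟨⟨i, rfl⟩, hi.2.1, hi.2.2⟩
    · intro i hi j hj hij
      simp only [Finset.mem_filter, Finset.mem_range] at hi hj
      exact T.iterate_inj (by omega) (by omega) hij
    · intro u hu
      simp only [hA2, Finset.mem_filter, Finset.mem_univ, true_and] at hu
      obtain ⟨i, hi, hiu⟩ := T.anc_index hu.1
      refine ⟨i, ?_, hiu⟩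
      simp only [Finset.mem_filter, Finset.mem_range]
      rw [hiu]
      exact ⟨by omega, hu.2.1, hu.2.2⟩
  have hpow : 2 ^ A2.card ≤ Fintype.card V := hA2eq ▸ pow_light_le H v
  -- pass to reals
  have hcardV : (0:ℝ) < Fintype.card V := by
    have : 0 < Fintype.card V := Fintype.card_pos_iff.2 ⟨v⟩
    exact_mod_cast this
  have hlog : (A2.card : ℝ) ≤ Real.logb 2 (Fintype.card V) := by
    have h1 : (A2.card : ℝ) = Real.logb 2 ((2:ℝ) ^ A2.card) := by
      rw [Real.logb_pow, Real.logb_self_eq_one (by norm_num), mul_one]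
    rw [h1]
    apply Real.logb_le_logb_of_le (by norm_num) (by positivity)
    exact_mod_cast hpow
  have hAle : (A.card : ℝ) ≤ (k' : ℝ) + (A2.card : ℝ) + 1 := by
    have : A.card ≤ k' + A2.card + 1 := by omega
    exact_mod_cast this
  linarith
end

section
/- Components Property of DFS: during a DFS traversal of an undirected graph, when the traversal is at vertex v, let C be a connected component of the subgraph induced by the unvisited vertices. If there exist an edge e from C to v and an edge e' from C to some already visited vertex, then there exists a valid DFS tree completion that uses edge e and never uses e'. -/
open Classical Finset

private lemma iter_mem_aux {V : Type*} (p : V → V) (S : Finset V)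
    (hS : ∀ x ∈ S, p x ∈ S) : ∀ k : ℕ, ∀ a ∈ S, p^[k] a ∈ S := by
  intro k
  induction k with
  | zero => intro a ha; simpa using ha
  | succ k ih =>
    intro a ha
    rw [Function.iterate_succ_apply]
    exact ih _ (hS a ha)

private lemma iter_update_aux {V : Type*} [DecidableEq V] (p : V → V) (S : Finset V)
    (hS : ∀ x ∈ S, p x ∈ S) (u : V) (hu : u ∉ S) (w : V) :
    ∀ k : ℕ, ∀ a ∈ S, (Function.update p u w)^[k] a = p^[k] a := by
  intro k
  induction k with
  | zero => simp
  | succ k ih =>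
    intro a ha
    rw [Function.iterate_succ_apply, Function.iterate_succ_apply,
      Function.update_of_ne (by rintro rfl; exact hu ha) _ _, ih _ (hS a ha)]

private lemma find_transition_aux {V : Type*} (R : V → V → Prop) (S : Finset V)
    {y c : V} (h : Relation.ReflTransGen R y c) (hy : y ∈ S) (hc : c ∉ S) :
    ∃ a b, a ∈ S ∧ b ∉ S ∧ R a b ∧ Relation.ReflTransGen R y a := by
  induction h with
  | refl => exact absurd hy hc
  | @tail b c hyb hbc ih =>
    by_cases hb : b ∈ S
    · exact ⟨b, c, hb, hc, hbc, hyb⟩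
    · exact ih hb

private theorem dfs_complete {n : ℕ} (G : SimpleGraph (Fin n)) (hG : G.Connected) (r : Fin n)
    (Vis₀ : Finset (Fin n)) (p0 : Fin n → Fin n)
    (hp0mem : ∀ u ∈ Vis₀, p0 u ∈ Vis₀)
    (C : Finset (Fin n))
    (hCunvis : ∀ c ∈ C, c ∉ Vis₀)
    (hCconn : ∀ c ∈ C, ∀ c' ∈ C,
      Relation.ReflTransGen (fun a b => G.Adj a b ∧ a ∉ Vis₀ ∧ b ∉ Vis₀) c c')
    (hCclosed : ∀ c ∈ C, ∀ c' : Fin n, c' ∉ Vis₀ →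
      Relation.ReflTransGen (fun a b => G.Adj a b ∧ a ∉ Vis₀ ∧ b ∉ Vis₀) c c' → c' ∈ C) :
    ∀ N : ℕ, ∀ (Vis : Finset (Fin n)) (v : Fin n) (p : Fin n → Fin n) (d : ℕ),
      v ∈ Vis → r ∈ Vis → Vis₀ ⊆ Vis → p r = r →
      (∀ u ∈ Vis, p u ∈ Vis) →
      (∀ u ∈ Vis, u ≠ r → G.Adj (p u) u) →
      (∀ u ∈ Vis, ∃ k : ℕ, p^[k] u = r) →
      (∀ a b : Fin n, a ∈ Vis → b ∈ Vis → G.Adj a b →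
        (∃ k : ℕ, p^[k] a = b) ∨ (∃ k : ℕ, p^[k] b = a)) →
      (∀ a b : Fin n, a ∈ Vis → b ∉ Vis → G.Adj a b → ∃ k : ℕ, p^[k] v = a) →
      (∀ u ∈ Vis₀, p u = p0 u) →
      ((∃ c ∈ C, c ∉ Vis) → ∃ y ∈ C, y ∈ Vis ∧ ∃ k : ℕ, p^[k] v = y) →
      p^[d] v = r →
      (n + 1) * (Finset.univ \ Vis).card + d < N →
      ∃ p' : Fin n → Fin n,
        p' r = r ∧
        (∀ u : Fin n, u ≠ r → G.Adj (p' u) u) ∧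
        (∀ u : Fin n, ∃ k : ℕ, p'^[k] u = r) ∧
        (∀ a b : Fin n, G.Adj a b → (∃ k : ℕ, p'^[k] a = b) ∨ (∃ k : ℕ, p'^[k] b = a)) ∧
        (∀ u ∈ Vis, p' u = p u) ∧
        (∀ u ∈ C, u ∉ Vis → p' u ∉ Vis₀) := by
  intro N
  induction N with
  | zero =>
    intro _ _ _ _ _ _ _ _ _ _ _ _ _ _ _ _ hlt
    omega
  | succ N ih =>
    intro Vis v p d hv hr hsub hroot hmem hadj hreach hdfs hstack hext hC hd hlt
    have hn : 0 < n := Fin.pos v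
    by_cases hfwd : ∃ u, u ∉ Vis ∧ G.Adj v u
    · -- forward step
      obtain ⟨u, hu, hvu⟩ := hfwd
      have hpres : ∀ k : ℕ, ∀ a ∈ Vis, (Function.update p u v)^[k] a = p^[k] a :=
        iter_update_aux p Vis hmem u hu v
      have hp₁u : Function.update p u v u = v := Function.update_self u v p
      have hp₁Vis : ∀ a ∈ Vis, Function.update p u v a = p a := by
        intro a ha
        exact Function.update_of_ne (by rintro rfl; exact hu ha) _ _
      have hp₁eq : ∀ x, x ∈ insert u Vis → x = u ∨ x ∈ Vis := fun x hx => Finset.mem_insert.mp hx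
      have hur : u ≠ r := by rintro rfl; exact hu hr
      have hcard : (Finset.univ \ insert u Vis).card + 1 = (Finset.univ \ Vis).card := by
        have h1 : Finset.univ \ insert u Vis = (Finset.univ \ Vis).erase u := by
          ext x
          simp only [Finset.mem_sdiff, Finset.mem_insert, Finset.mem_erase, Finset.mem_univ,
            true_and]
          tauto
        rw [h1, Finset.card_erase_add_one (by simp [Finset.mem_sdiff, hu])]
      have key := ih (insert u Vis) u (Function.update p u v) (d + 1)
        (Finset.mem_insert_self u Vis)
        (Finset.mem_insert_of_mem hr)
        (hsub.trans (Finset.subset_insert u Vis))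
        (by rw [hp₁Vis r hr]; exact hroot)
        (by
          intro x hx
          rcases hp₁eq x hx with h | h
          · rw [show Function.update p u v x = v by rw [h]; exact hp₁u]
            exact Finset.mem_insert_of_mem hv
          · rw [hp₁Vis x h]; exact Finset.mem_insert_of_mem (hmem x h))
        (by
          intro x hx hxr
          rcases hp₁eq x hx with h | h
          · rw [show Function.update p u v x = v by rw [h]; exact hp₁u, h]
            exact hvu
          · rw [hp₁Vis x h]; exact hadj x h hxr)
        (by
          intro x hx
          rcases hp₁eq x hx with h | h
          · obtain ⟨k, hk⟩ := hreach v hv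
            refine ⟨k + 1, ?_⟩
            rw [h, Function.iterate_succ_apply, hp₁u, hpres k v hv, hk]
          · obtain ⟨k, hk⟩ := hreach x h
            exact ⟨k, by rw [hpres k x h, hk]⟩)
        (by
          intro a b ha hb hab
          rcases hp₁eq a ha with h1 | h1
          · subst h1
            rcases hp₁eq b hb with h2 | h2
            · subst h2
              exact absurd hab (G.loopless.irrefl _)
            · left
              obtain ⟨k, hk⟩ := hstack b a h2 hu hab.symm
              refine ⟨k + 1, ?_⟩
              rw [Function.iterate_succ_apply, hp₁u, hpres k v hv, hk]
          · rcases hp₁eq b hb with h2 | h2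
            · subst h2
              right
              obtain ⟨k, hk⟩ := hstack a b h1 hu hab
              refine ⟨k + 1, ?_⟩
              rw [Function.iterate_succ_apply, hp₁u, hpres k v hv, hk]
            · rcases hdfs a b h1 h2 hab with ⟨k, hk⟩ | ⟨k, hk⟩
              · exact Or.inl ⟨k, by rw [hpres k a h1, hk]⟩
              · exact Or.inr ⟨k, by rw [hpres k b h2, hk]⟩)
        (by
          intro a b ha hb hab
          have hb' : b ∉ Vis := fun h => hb (Finset.mem_insert_of_mem h)
          rcases hp₁eq a ha with h | h
          · exact ⟨0, h.symm⟩
          · obtain ⟨k, hk⟩ := hstack a b h hb' hab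
            exact ⟨k + 1, by rw [Function.iterate_succ_apply, hp₁u, hpres k v hv, hk]⟩)
        (by
          intro x hx
          rw [hp₁Vis x (hsub hx)]; exact hext x hx)
        (by
          rintro ⟨c, hc, hc'⟩
          have hc'' : c ∉ Vis := fun h => hc' (Finset.mem_insert_of_mem h)
          obtain ⟨y, hyC, hyV, k, hk⟩ := hC ⟨c, hc, hc''⟩
          exact ⟨y, hyC, Finset.mem_insert_of_mem hyV,
            k + 1, by rw [Function.iterate_succ_apply, hp₁u, hpres k v hv, hk]⟩)
        (by rw [Function.iterate_succ_apply, hp₁u, hpres d v hv]; exact hd)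
        (by
          rw [← hcard] at hlt
          have hexp : (n + 1) * ((Finset.univ \ insert u Vis).card + 1)
              = (n + 1) * (Finset.univ \ insert u Vis).card + n + 1 := by ring
          rw [hexp] at hlt
          generalize (n + 1) * (Finset.univ \ insert u Vis).card = q at hlt ⊢
          omega)
      obtain ⟨p', h1, h2, h3, h4, h5, h6⟩ := key
      refine ⟨p', h1, h2, h3, h4, ?_, ?_⟩
      · intro x hx
        rw [h5 x (Finset.mem_insert_of_mem hx), hp₁Vis x hx]
      · intro x hxC hxV
        by_cases hxu : x = u
        · rw [h5 x (by rw [hxu]; exact Finset.mem_insert_self u Vis),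
            show Function.update p u v x = v by rw [hxu]; exact hp₁u]
          obtain ⟨y, hyC, hyV, k, hk⟩ := hC ⟨x, hxC, hxV⟩
          intro hvV₀
          have hchain : ∀ j : ℕ, p^[j] v ∈ Vis₀ :=
            fun j => iter_mem_aux p Vis₀
              (fun z hz => by rw [hext z hz]; exact hp0mem z hz) j v hvV₀
          exact hCunvis y hyC (hk ▸ hchain k)
        · exact h6 x hxC (fun h => (Finset.mem_insert.mp h).elim hxu hxV)
    · by_cases hvr : v = r
      · -- terminate: Vis = univ
        subst hvr
        have hall : ∀ x : Fin n, x ∈ Vis := by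
          intro x
          by_contra hx
          have hreach' : Relation.ReflTransGen G.Adj v x :=
            (SimpleGraph.reachable_iff_reflTransGen v x).mp (hG.preconnected v x)
          obtain ⟨a, b, ha, hb, hab, _⟩ := find_transition_aux G.Adj Vis hreach' hv hx
          obtain ⟨k, hk⟩ := hstack a b ha hb hab
          have hfix : p^[k] v = v := Function.iterate_fixed hroot k
          rw [hfix] at hk
          exact hfwd ⟨b, hb, by rwa [← hk] at hab⟩
        refine ⟨p, hroot, fun x hx => hadj x (hall x) hx, fun x => hreach x (hall x),
          fun a b hab => hdfs a b (hall a) (hall b) hab, fun x _ => rfl,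
          fun x _ hxV => absurd (hall x) hxV⟩
      · -- backtrack
        have hd1 : d ≠ 0 := by rintro rfl; exact hvr hd
        obtain ⟨d, rfl⟩ : ∃ d', d = d' + 1 := ⟨d - 1, by omega⟩
        have hpv : p v ∈ Vis := hmem v hv
        have hstack' : ∀ a b : Fin n, a ∈ Vis → b ∉ Vis → G.Adj a b →
            ∃ k : ℕ, p^[k] (p v) = a := by
          intro a b ha hb hab
          obtain ⟨k, hk⟩ := hstack a b ha hb hab
          have hav : a ≠ v := by rintro rfl; exact hfwd ⟨b, hb, hab⟩
          match k, hk with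
          | 0, hk => exact absurd hk.symm hav
          | k + 1, hk => exact ⟨k, by rw [← Function.iterate_succ_apply]; exact hk⟩
        exact ih Vis (p v) p d hpv hr hsub hroot hmem hadj hreach hdfs hstack' hext
          (by
            rintro ⟨c, hcC, hcV⟩
            obtain ⟨y, hyC, hyV, k, hk⟩ := hC ⟨c, hcC, hcV⟩
            have hpath := hCconn y hyC c hcC
            obtain ⟨a, b, ha, hb, hab, hya⟩ :=
              find_transition_aux _ Vis hpath hyV hcV
            obtain ⟨k', hk'⟩ := hstack' a b ha hb hab.1
            have haC : a ∈ C := hCclosed y hyC a hab.2.1 hya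
            exact ⟨a, haC, ha, k', hk'⟩)
          (by rwa [← Function.iterate_succ_apply])
          (by omega)

/-- **Components Property of DFS.** During a DFS traversal of a connected
undirected graph `G` rooted at `r`, suppose the visited vertices `Vis` carry a partial DFS
tree with parent map `p0` and current vertex `v` (every edge leaving the visited region
emanates from the stack, i.e. from an ancestor of `v`).  Let `C` be a connected component
of the subgraph induced by the unvisited vertices.  If there is an edge `e = (c₁, v)` from
`C` to `v` and a different edge `e' = (c₂, w)` from `C` to a visited vertex `w`, then
there exists a valid completion to a DFS tree of `G` (a rooted spanning tree, with tree
edges in `G`, in which every edge of `G` joins an ancestor-descendant pair, extending the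
partial tree) that uses the edge `e` and never uses `e'`. -/
theorem components_property {n : ℕ} (G : SimpleGraph (Fin n)) (hG : G.Connected)
    (r : Fin n) (Vis : Finset (Fin n)) (v : Fin n) (hv : v ∈ Vis) (hr : r ∈ Vis)
    (p0 : Fin n → Fin n)
    (hp0root : p0 r = r)
    (hp0mem : ∀ u ∈ Vis, p0 u ∈ Vis)
    (hp0adj : ∀ u ∈ Vis, u ≠ r → G.Adj (p0 u) u)
    (hp0reach : ∀ u ∈ Vis, ∃ k : ℕ, p0^[k] u = r)
    (hp0dfs : ∀ a b : Fin n, a ∈ Vis → b ∈ Vis → G.Adj a b →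
      (∃ k : ℕ, p0^[k] a = b) ∨ (∃ k : ℕ, p0^[k] b = a))
    (hstack : ∀ a b : Fin n, a ∈ Vis → b ∉ Vis → G.Adj a b → ∃ k : ℕ, p0^[k] v = a)
    (C : Finset (Fin n))
    (hCunvis : ∀ c ∈ C, c ∉ Vis)
    (hCconn : ∀ c ∈ C, ∀ c' ∈ C,
      Relation.ReflTransGen (fun a b => G.Adj a b ∧ a ∉ Vis ∧ b ∉ Vis) c c')
    (hCclosed : ∀ c ∈ C, ∀ c' : Fin n, c' ∉ Vis →
      Relation.ReflTransGen (fun a b => G.Adj a b ∧ a ∉ Vis ∧ b ∉ Vis) c c' → c' ∈ C)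
    (c₁ : Fin n) (hc₁ : c₁ ∈ C) (he : G.Adj c₁ v)
    (c₂ : Fin n) (w : Fin n) (hc₂ : c₂ ∈ C) (hw : w ∈ Vis) (he' : G.Adj c₂ w)
    (hne : s(c₂, w) ≠ s(c₁, v)) :
    ∃ p : Fin n → Fin n,
      p r = r ∧
      (∀ u : Fin n, u ≠ r → G.Adj (p u) u) ∧
      (∀ u : Fin n, ∃ k : ℕ, p^[k] u = r) ∧
      (∀ a b : Fin n, G.Adj a b → (∃ k : ℕ, p^[k] a = b) ∨ (∃ k : ℕ, p^[k] b = a)) ∧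
      (∀ u ∈ Vis, p u = p0 u) ∧
      p c₁ = v ∧
      p c₂ ≠ w ∧ p w ≠ c₂ := by
    classical
  have hc₁V : c₁ ∉ Vis := hCunvis c₁ hc₁
  have hpres : ∀ k : ℕ, ∀ a ∈ Vis, (Function.update p0 c₁ v)^[k] a = p0^[k] a :=
    iter_update_aux p0 Vis hp0mem c₁ hc₁V v
  have hp₁c : Function.update p0 c₁ v c₁ = v := Function.update_self _ _ _
  have hp₁Vis : ∀ a ∈ Vis, Function.update p0 c₁ v a = p0 a := fun a ha =>
    Function.update_of_ne (by rintro rfl; exact hc₁V ha) _ _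
  have hp₁eq : ∀ x, x ∈ insert c₁ Vis → x = c₁ ∨ x ∈ Vis := fun x hx => Finset.mem_insert.mp hx
  obtain ⟨d, hdv⟩ := hp0reach v hv
  have key := dfs_complete G hG r Vis p0 hp0mem C hCunvis hCconn hCclosed
    ((n + 1) * (Finset.univ \ insert c₁ Vis).card + (d + 1) + 1)
    (insert c₁ Vis) c₁ (Function.update p0 c₁ v) (d + 1)
    (Finset.mem_insert_self c₁ Vis)
    (Finset.mem_insert_of_mem hr)
    (Finset.subset_insert c₁ Vis)
    (by rw [hp₁Vis r hr]; exact hp0root)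
    (by
      intro x hx
      rcases hp₁eq x hx with h | h
      · rw [show Function.update p0 c₁ v x = v by rw [h]; exact hp₁c]
        exact Finset.mem_insert_of_mem hv
      · rw [hp₁Vis x h]; exact Finset.mem_insert_of_mem (hp0mem x h))
    (by
      intro x hx hxr
      rcases hp₁eq x hx with h | h
      · rw [show Function.update p0 c₁ v x = v by rw [h]; exact hp₁c, h]
        exact he.symm
      · rw [hp₁Vis x h]; exact hp0adj x h hxr)
    (by
      intro x hx
      rcases hp₁eq x hx with h | h
      · refine ⟨d + 1, ?_⟩
        rw [h, Function.iterate_succ_apply, hp₁c, hpres d v hv, hdv]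
      · obtain ⟨k, hk⟩ := hp0reach x h
        exact ⟨k, by rw [hpres k x h, hk]⟩)
    (by
      intro a b ha hb hab
      rcases hp₁eq a ha with h1 | h1
      · subst h1
        rcases hp₁eq b hb with h2 | h2
        · subst h2
          exact absurd hab (G.loopless.irrefl _)
        · left
          obtain ⟨k, hk⟩ := hstack b a h2 hc₁V hab.symm
          refine ⟨k + 1, ?_⟩
          rw [Function.iterate_succ_apply, hp₁c, hpres k v hv, hk]
      · rcases hp₁eq b hb with h2 | h2
        · subst h2
          right
          obtain ⟨k, hk⟩ := hstack a b h1 hc₁V hab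
          refine ⟨k + 1, ?_⟩
          rw [Function.iterate_succ_apply, hp₁c, hpres k v hv, hk]
        · rcases hp0dfs a b h1 h2 hab with ⟨k, hk⟩ | ⟨k, hk⟩
          · exact Or.inl ⟨k, by rw [hpres k a h1, hk]⟩
          · exact Or.inr ⟨k, by rw [hpres k b h2, hk]⟩)
    (by
      intro a b ha hb hab
      have hb' : b ∉ Vis := fun h => hb (Finset.mem_insert_of_mem h)
      rcases hp₁eq a ha with h | h
      · exact ⟨0, h.symm⟩
      · obtain ⟨k, hk⟩ := hstack a b h hb' hab
        exact ⟨k + 1, by rw [Function.iterate_succ_apply, hp₁c, hpres k v hv, hk]⟩)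
    (fun x hx => hp₁Vis x hx)
    (fun _ => ⟨c₁, hc₁, Finset.mem_insert_self c₁ Vis, 0, rfl⟩)
    (by rw [Function.iterate_succ_apply, hp₁c, hpres d v hv]; exact hdv)
    (Nat.lt_succ_self _)
  obtain ⟨p', h1, h2, h3, h4, h5, h6⟩ := key
  have hpc₁ : p' c₁ = v := by
    rw [h5 c₁ (Finset.mem_insert_self c₁ Vis), hp₁c]
  have hagree : ∀ u ∈ Vis, p' u = p0 u := by
    intro x hx
    rw [h5 x (Finset.mem_insert_of_mem hx), hp₁Vis x hx]
  refine ⟨p', h1, h2, h3, h4, hagree, hpc₁, ?_, ?_⟩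
  · by_cases h : c₂ = c₁
    · subst h
      rw [hpc₁]
      intro hvw
      exact hne (by rw [hvw])
    · have hc₂V : c₂ ∉ insert c₁ Vis := by
        intro hmem'
        rcases Finset.mem_insert.mp hmem' with h' | h'
        · exact h h'
        · exact hCunvis c₂ hc₂ h'
      intro heq
      exact h6 c₂ hc₂ hc₂V (heq ▸ hw)
  · rw [hagree w hw]
    intro heq
    exact hCunvis c₂ hc₂ (heq ▸ hp0mem w hw)
end

section
/- If DFS traversal at each vertex recursively visits the heavy child first, then the vertices of every heavy path receive consecutive depth-first numbers. -/
open Classical Finset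

/-- If a DFS traversal of a rooted tree recursively visits, at each
vertex, the heavy child first (before any other children), then the vertices of every heavy
path receive consecutive depth-first numbers: each heavy child is visited immediately after
its parent. -/
theorem heavy_paths_consecutive_dfn {n : ℕ} (T : RTree (Fin n)) (H : HLDecomp T)
    (ord : Fin n ≃ Fin n)
    (hroot : (ord T.root : ℕ) = 0)
    (hdfs : ∀ i j : Fin n, (i : ℕ) = (j : ℕ) + 1 →
      T.IsAncestor (T.parent (ord.symm i)) (ord.symm j))
    (hheavyFirst : ∀ u c c' : Fin n, T.parent c = u → H.heavy c →
      T.parent c' = u → c' ≠ u → ¬ H.heavy c' → (ord c : ℕ) < (ord c' : ℕ)) :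
    ∀ c : Fin n, H.heavy c → (ord c : ℕ) = (ord (T.parent c) : ℕ) + 1 := by
  have root_fix : ∀ k : ℕ, T.parent^[k] T.root = T.root := by
    intro k
    induction k with
    | zero => rfl
    | succ k ih => rw [Function.iterate_succ_apply', ih, T.parent_root]
  -- transitivity of ancestor
  have trans : ∀ a b c : Fin n, T.IsAncestor a b → T.IsAncestor b c → T.IsAncestor a c := by
    rintro a b c ⟨p, hp⟩ ⟨q, hq⟩
    exact ⟨p + q, by rw [Function.iterate_add_apply, hq, hp]⟩
  -- key lemma: ancestor's dfn ≤ descendant's dfn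
  have anc_le : ∀ m : ℕ, ∀ v u : Fin n, (ord v : ℕ) = m → T.IsAncestor u v →
      (ord u : ℕ) ≤ (ord v : ℕ) := by
    intro m
    induction m using Nat.strong_induction_on with
    | _ m ih =>
      rintro v u hv ⟨k, hk⟩
      match m, hv with
      | 0, hv =>
        have hvr : v = T.root := ord.injective (Fin.ext (by rw [hv, hroot]))
        subst hvr
        rw [root_fix] at hk
        subst hk
        exact le_refl _
      | (j+1), hv =>
        cases k with
        | zero => subst hk; exact le_refl _
        | succ k' =>
          have hjn : j < n := lt_trans (by omega : j < (ord v : ℕ)) (ord v).isLt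
          set jf : Fin n := ⟨j, hjn⟩ with hjf
          have hanc1 : T.IsAncestor (T.parent v) (ord.symm jf) := by
            have := hdfs (ord v) jf (by simp [hjf, hv])
            rwa [Equiv.symm_apply_apply] at this
          have hanc2 : T.IsAncestor u (T.parent v) :=
            ⟨k', by rw [← Function.iterate_succ_apply]; exact hk⟩
          have hanc : T.IsAncestor u (ord.symm jf) := trans _ _ _ hanc2 hanc1
          have hordw : (ord (ord.symm jf) : ℕ) = j := by simp [hjf]
          have := ih j (by omega) (ord.symm jf) u hordw hanc
          omega
  intro c hc
  set u := T.parent c with hu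
  have hcr : c ≠ T.root := H.heavy_ne_root c hc
  have h0 : (ord c : ℕ) ≠ 0 := fun h => hcr (ord.injective (Fin.ext (by rw [h, hroot])))
  obtain ⟨k, hk⟩ : ∃ k, (ord c : ℕ) = k + 1 := ⟨(ord c : ℕ) - 1, by omega⟩
  have hkn : k < n := lt_trans (by omega : k < (ord c : ℕ)) (ord c).isLt
  set jf : Fin n := ⟨k, hkn⟩ with hjf
  set w := ord.symm jf with hw
  have hordw : (ord w : ℕ) = k := by simp [hw, hjf]
  have hancu : T.IsAncestor u w := by
    have := hdfs (ord c) jf (by simp [hjf, hk])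
    rwa [Equiv.symm_apply_apply] at this
  have huw : u = w := by
    by_contra hne
    have hK0 : T.parent^[0] w ≠ u := fun h => hne (h.symm)
    have hKpos : 0 < Nat.find hancu := by
      rcases Nat.eq_zero_or_pos (Nat.find hancu) with h | h
      · exact absurd (h ▸ Nat.find_spec hancu) hK0
      · exact h
    set K := Nat.find hancu with hKdef
    have hK : T.parent^[K] w = u := Nat.find_spec hancu
    set c' := T.parent^[K-1] w with hc'
    have hpc' : T.parent c' = u := by
      have h1 : T.parent^[(K-1)+1] w = u := by
        have hKK : K - 1 + 1 = K := by omega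
        rw [hKK]; exact hK
      rw [Function.iterate_succ_apply'] at h1
      exact h1
    have hc'u : c' ≠ u := fun h => Nat.find_min hancu (by omega : K - 1 < K) (hc' ▸ h)
    have hancc' : T.IsAncestor c' w := ⟨K - 1, rfl⟩
    have hle : (ord c' : ℕ) ≤ k := by
      have := anc_le k w c' hordw hancc'
      omega
    by_cases hcc : c' = c
    · rw [hcc] at hle; omega
    · have hnh : ¬ H.heavy c' := fun h => hcc (H.heavy_unique c' c h hc (by rw [hpc', hu]))
      have := hheavyFirst u c c' hu.symm hc hpc' hc'u hnh
      omega
  rw [huw, hordw]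
  exact hk
end

section
/- In a fractional cascading structure over n sorted arrays A₁,...,Aₙ with total size m, where F₁ = A₁ and Fᵢ is the sorted merge of Aᵢ with the even-indexed elements of Fᵢ₋₁, the total number of elements stored across all Fᵢ is at most 2m. -/
/-- In a fractional cascading structure over `n` sorted arrays
`A₁, …, Aₙ` with sizes `l i` and total size `m = Σ l i`, where `F₁ = A₁` and `Fᵢ` is the
sorted merge of `Aᵢ` with the even-indexed elements of `Fᵢ₋₁` (so that
`|Fᵢ| = l i + ⌊|Fᵢ₋₁| / 2⌋`), the total number of elements stored across all the `Fᵢ` is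
at most `2 m`. -/
theorem fractional_cascading_size (n : ℕ) (l f : ℕ → ℕ)
    (h0 : f 0 = l 0)
    (hstep : ∀ i : ℕ, f (i + 1) = l (i + 1) + f i / 2) :
    ∑ i ∈ Finset.range n, f i ≤ 2 * ∑ i ∈ Finset.range n, l i := by
  have aux : ∀ k : ℕ, ∑ i ∈ Finset.range (k + 1), f i + f k ≤
      2 * ∑ i ∈ Finset.range (k + 1), l i := by
    intro k
    induction k with
    | zero => simp [h0]; omega
    | succ k ih =>
      rw [Finset.sum_range_succ, Finset.sum_range_succ (f := l)]
      have h := hstep k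
      have hd : f k / 2 * 2 ≤ f k := Nat.div_mul_le_self _ _
      omega
  cases n with
  | zero => simp
  | succ k =>
    have := aux k
    omega
end

section
/- In a rooted tree, a non-root vertex x is an articulation point of the graph G if and only if some child c of x in the DFS tree has high-point dfn value ≥ dfn(x), where the high-point of c is the minimum dfn among dfn(c) and the dfn's of endpoints of back edges from the subtree of c. -/
open Classical Finset

/-- The high-point of a vertex `c`: the minimum dfn among `dfn c` and the dfn's of proper
ancestors reached by back edges (non-tree edges of `G`) from vertices in the subtree of
`c`. -/
noncomputable def highPoint {n : ℕ} (G : SimpleGraph (Fin n)) (T : RTree (Fin n))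
    (ord : Fin n ≃ Fin n) (c : Fin n) : WithTop ℕ :=
  ((Finset.univ.filter fun w => w = c ∨
      ∃ u : Fin n, T.IsAncestor c u ∧ G.Adj u w ∧ T.IsAncestor w u ∧ w ≠ u ∧
        T.parent u ≠ w).image fun w => (ord w : ℕ)).min

namespace ArtAux

variable {V : Type*}

lemma anc_refl (T : RTree V) (v : V) : T.IsAncestor v v := ⟨0, rfl⟩

lemma anc_trans (T : RTree V) {a b c : V} (h1 : T.IsAncestor a b) (h2 : T.IsAncestor b c) :
    T.IsAncestor a c := by
  obtain ⟨k, hk⟩ := h1; obtain ⟨l, hl⟩ := h2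
  exact ⟨k + l, by rw [Function.iterate_add_apply, hl, hk]⟩

lemma anc_chain (T : RTree V) {u w v : V} (h1 : T.IsAncestor u v) (h2 : T.IsAncestor w v) :
    T.IsAncestor u w ∨ T.IsAncestor w u := by
  obtain ⟨k, hk⟩ := h1; obtain ⟨l, hl⟩ := h2
  rcases le_total k l with h | h
  · right; exact ⟨l - k, by rw [← hk, ← Function.iterate_add_apply, Nat.sub_add_cancel h, hl]⟩
  · left; exact ⟨k - l, by rw [← hl, ← Function.iterate_add_apply, Nat.sub_add_cancel h, hk]⟩

lemma anc_root (T : RTree V) {u : V} (h : T.IsAncestor u T.root) : u = T.root := by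
  obtain ⟨k, hk⟩ := h
  rw [Function.iterate_fixed T.parent_root k] at hk; exact hk.symm

lemma eq_root_of_parent_eq (T : RTree V) {v : V} (h : T.parent v = v) : v = T.root := by
  obtain ⟨k, hk⟩ := T.reaches v
  rw [Function.iterate_fixed h k] at hk; exact hk

lemma dfn_mono {n : ℕ} (T : RTree (Fin n)) (ord : Fin n ≃ Fin n)
    (hroot : (ord T.root : ℕ) = 0)
    (hdfs : ∀ i j : Fin n, (i : ℕ) = (j : ℕ) + 1 →
      T.IsAncestor (T.parent (ord.symm i)) (ord.symm j)) :
    ∀ t : ℕ, ∀ v u : Fin n, (ord v : ℕ) = t → T.IsAncestor u v → (ord u : ℕ) ≤ (ord v : ℕ) := by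
  intro t
  induction t using Nat.strong_induction_on with
  | _ t ih =>
    intro v u hv hanc
    rcases Nat.eq_zero_or_pos t with ht | ht
    · have hvr : v = T.root := by
        apply ord.injective; apply Fin.ext; omega
      subst hvr
      rw [anc_root T hanc]
    · obtain ⟨k, hk⟩ := hanc
      cases k with
      | zero => exact hk ▸ le_rfl
      | succ k =>
        have hjn : t - 1 < n := by have := (ord v).isLt; omega
        have hij : ((ord v : Fin n) : ℕ) = ((⟨t - 1, hjn⟩ : Fin n) : ℕ) + 1 := by
          simp; omega
        have hpar := hdfs (ord v) ⟨t - 1, hjn⟩ hij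
        rw [Equiv.symm_apply_apply] at hpar
        have huw : T.IsAncestor u (ord.symm ⟨t - 1, hjn⟩) := by
          refine anc_trans T ⟨k, ?_⟩ hpar
          rw [← Function.iterate_succ_apply, hk]
        have hord : (ord (ord.symm ⟨t - 1, hjn⟩) : ℕ) = t - 1 := by simp
        have := ih (t - 1) (by omega) (ord.symm ⟨t - 1, hjn⟩) u hord huw
        omega

lemma reachUp {n : ℕ} (G : SimpleGraph (Fin n)) (T : RTree (Fin n)) (x : Fin n)
    (hspan : ∀ v : Fin n, v ≠ T.root → G.Adj (T.parent v) v) :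
    ∀ (k : ℕ) (v : Fin n) (h : ∀ i, i ≤ k → T.parent^[i] v ≠ x),
      (G.induce {v : Fin n | v ≠ x}).Reachable ⟨v, h 0 (Nat.zero_le _)⟩
        ⟨T.parent^[k] v, h k le_rfl⟩ := by
  intro k
  induction k with
  | zero => intro v h; rfl
  | succ k ih =>
    intro v h
    by_cases hv : v = T.root
    · subst hv
      have he : (⟨T.parent^[k+1] T.root, h (k+1) le_rfl⟩ : {v : Fin n | v ≠ x}) =
          ⟨T.root, h 0 (Nat.zero_le _)⟩ :=
        Subtype.ext (Function.iterate_fixed T.parent_root (k+1))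
      rw [he]
    · have h' : ∀ i, i ≤ k → T.parent^[i] (T.parent v) ≠ x := by
        intro i hi
        rw [← Function.iterate_succ_apply]
        exact h (i+1) (by omega)
      have hadj : (G.induce {v : Fin n | v ≠ x}).Adj ⟨v, h 0 (Nat.zero_le _)⟩
          ⟨T.parent v, h' 0 (Nat.zero_le _)⟩ := (hspan v hv).symm
      have he : (⟨T.parent^[k] (T.parent v), h' k le_rfl⟩ : {v : Fin n | v ≠ x}) =
          ⟨T.parent^[k+1] v, h (k+1) le_rfl⟩ :=
        Subtype.ext (Function.iterate_succ_apply _ _ _).symm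
      exact hadj.reachable.trans (he ▸ ih (T.parent v) h')

end ArtAux

/-- Let `G` be a connected undirected graph with DFS tree `T` rooted at
`r` and dfn numbering `ord` in visit order.  A non-root vertex `x` is an articulation point
of `G` (its removal disconnects `G`) if and only if some child `c` of `x` in `T` has
high-point dfn value `≥ dfn x`. -/
theorem articulation_point_iff {n : ℕ} (G : SimpleGraph (Fin n)) (hG : G.Connected)
    (T : RTree (Fin n)) (ord : Fin n ≃ Fin n)
    (hroot : (ord T.root : ℕ) = 0)
    (hspan : ∀ v : Fin n, v ≠ T.root → G.Adj (T.parent v) v)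
    (hdfs : ∀ i j : Fin n, (i : ℕ) = (j : ℕ) + 1 →
      T.IsAncestor (T.parent (ord.symm i)) (ord.symm j))
    (hdfsProp : ∀ a b : Fin n, G.Adj a b → T.IsAncestor a b ∨ T.IsAncestor b a)
    (x : Fin n) (hx : x ≠ T.root) :
    ¬ (G.induce {v : Fin n | v ≠ x}).Connected ↔
      ∃ c : Fin n, T.parent c = x ∧ c ≠ x ∧
        ((ord x : ℕ) : WithTop ℕ) ≤ highPoint G T ord c := by
  have dfn_le : ∀ {u v : Fin n}, T.IsAncestor u v → (ord u : ℕ) ≤ (ord v : ℕ) :=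
    fun {u v} h => ArtAux.dfn_mono T ord hroot hdfs (ord v : ℕ) v u rfl h
  have dfn_lt : ∀ {u v : Fin n}, T.IsAncestor u v → u ≠ v → (ord u : ℕ) < (ord v : ℕ) :=
    fun {u v} h hne => lt_of_le_of_ne (dfn_le h)
      (fun he => hne (ord.injective (Fin.ext he)))
  have antisymm : ∀ {u v : Fin n}, T.IsAncestor u v → T.IsAncestor v u → u = v :=
    fun {u v} h1 h2 => ord.injective (Fin.ext (le_antisymm (dfn_le h1) (dfn_le h2)))
  have hrx : T.root ≠ x := fun h => hx h.symm
  constructor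
  · -- articulation ⇒ ∃ c (contrapositive)
    intro hdis
    by_contra hno
    push_neg at hno
    apply hdis
    have toRoot : ∀ a : {v : Fin n | v ≠ x},
        (G.induce {v : Fin n | v ≠ x}).Reachable a ⟨T.root, hrx⟩ := by
      rintro ⟨v, hv⟩
      by_cases hxv : T.IsAncestor x v
      · obtain ⟨k, hk⟩ := hxv
        have hk0 : k ≠ 0 := by rintro rfl; simp at hk; exact hv hk
        set c := T.parent^[k-1] v with hc
        have hpc : T.parent c = x := by
          have h' : T.parent^[k-1+1] v = x := by
            rwa [Nat.sub_add_cancel (Nat.one_le_iff_ne_zero.mpr hk0)]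
          rw [Function.iterate_succ_apply'] at h'
          rw [hc]; exact h'
        have hcx2 : c ≠ x := fun he => hx (ArtAux.eq_root_of_parent_eq T (he ▸ hpc))
        have hxc : T.IsAncestor x c := ⟨1, hpc⟩
        have hnotcx : ¬ T.IsAncestor c x := fun h => hcx2 (antisymm h hxc)
        have hlt := hno c hpc hcx2
        have hcmem : c ∈ (Finset.univ.filter fun w => w = c ∨
            ∃ u : Fin n, T.IsAncestor c u ∧ G.Adj u w ∧ T.IsAncestor w u ∧ w ≠ u ∧
              T.parent u ≠ w) := by
          simp
        have hSne : ((Finset.univ.filter fun w => w = c ∨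
            ∃ u : Fin n, T.IsAncestor c u ∧ G.Adj u w ∧ T.IsAncestor w u ∧ w ≠ u ∧
              T.parent u ≠ w).image fun w => (ord w : ℕ)).Nonempty :=
          ⟨_, Finset.mem_image_of_mem _ hcmem⟩
        have hcoe : highPoint G T ord c = (((Finset.univ.filter fun w => w = c ∨
            ∃ u : Fin n, T.IsAncestor c u ∧ G.Adj u w ∧ T.IsAncestor w u ∧ w ≠ u ∧
              T.parent u ≠ w).image fun w => (ord w : ℕ)).min' hSne : ℕ) :=
          (Finset.coe_min' hSne).symm
        obtain ⟨w, hwS, hword⟩ := Finset.mem_image.mp (Finset.min'_mem _ hSne)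
        have hwlt : (ord w : ℕ) < (ord x : ℕ) := by
          rw [hcoe] at hlt
          rw [hword]
          exact_mod_cast hlt
        simp only [Finset.mem_filter, Finset.mem_univ, true_and] at hwS
        rcases hwS with rfl | ⟨u, hcu, huw, hwu, hwne, hpu⟩
        · exact absurd hwlt (not_lt.mpr (dfn_lt hxc (Ne.symm hcx2)).le)
        · have hxw : ¬ T.IsAncestor x w := fun h => absurd (dfn_le h) (by omega)
          have hwx : w ≠ x := fun he => hxw (he ▸ ArtAux.anc_refl T x)
          have hcu' := hcu
          obtain ⟨m, hm⟩ := hcu'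
          have hux : u ≠ x := fun he => hnotcx (he ▸ hcu)
          have h1 : ∀ i, i ≤ k - 1 → T.parent^[i] v ≠ x := by
            intro i hi he
            exact hnotcx ⟨k - 1 - i, by
              rw [← he, ← Function.iterate_add_apply, Nat.sub_add_cancel hi, hc]⟩
          have r1 := ArtAux.reachUp G T x hspan (k-1) v h1
          have h2 : ∀ i, i ≤ m → T.parent^[i] u ≠ x := by
            intro i hi he
            exact hnotcx ⟨m - i, by
              rw [← he, ← Function.iterate_add_apply, Nat.sub_add_cancel hi, hm]⟩
          have r2 := ArtAux.reachUp G T x hspan m u h2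
          obtain ⟨l, hl⟩ := T.reaches w
          have h3 : ∀ i, i ≤ l → T.parent^[i] w ≠ x := fun i _ he => hxw ⟨i, he⟩
          have r3 := ArtAux.reachUp G T x hspan l w h3
          have hadj : (G.induce {v : Fin n | v ≠ x}).Adj ⟨u, hux⟩ ⟨w, hwx⟩ := huw
          have recast : ∀ {a b a' b' : {v : Fin n | v ≠ x}}, a = a' → b = b' →
              (G.induce {v : Fin n | v ≠ x}).Reachable a b →
              (G.induce {v : Fin n | v ≠ x}).Reachable a' b' := by
            rintro a b a' b' rfl rfl h; exact h
          have ra : (G.induce {v : Fin n | v ≠ x}).Reachable ⟨v, hv⟩ ⟨c, hcx2⟩ :=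
            recast rfl (Subtype.ext hc.symm) r1
          have rb : (G.induce {v : Fin n | v ≠ x}).Reachable ⟨u, hux⟩ ⟨c, hcx2⟩ :=
            recast rfl (Subtype.ext hm) r2
          have rc : (G.induce {v : Fin n | v ≠ x}).Reachable ⟨w, hwx⟩ ⟨T.root, hrx⟩ :=
            recast rfl (Subtype.ext hl) r3
          exact ra.trans (rb.symm.trans (hadj.reachable.trans rc))
      · obtain ⟨l, hl⟩ := T.reaches v
        have h1 : ∀ i, i ≤ l → T.parent^[i] v ≠ x := fun i _ he => hxv ⟨i, he⟩
        have r1 := ArtAux.reachUp G T x hspan l v h1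
        have recast : ∀ {a b a' b' : {v : Fin n | v ≠ x}}, a = a' → b = b' →
            (G.induce {v : Fin n | v ≠ x}).Reachable a b →
            (G.induce {v : Fin n | v ≠ x}).Reachable a' b' := by
          rintro a b a' b' rfl rfl h; exact h
        exact recast rfl (Subtype.ext hl) r1
    haveI : Nonempty {v : Fin n | v ≠ x} := ⟨⟨T.root, hrx⟩⟩
    exact SimpleGraph.Connected.mk fun a b => (toRoot a).trans (toRoot b).symm
  · rintro ⟨c, hpc, hcx, hhp⟩ hconn
    have step : ∀ a b : Fin n, G.Adj a b → a ≠ x → b ≠ x →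
        T.IsAncestor c a → T.IsAncestor c b := by
      intro a b hab hax hbx hca
      by_contra hcb
      rcases hdfsProp a b hab with hab' | hba
      · exact hcb (ArtAux.anc_trans T hca hab')
      · rcases ArtAux.anc_chain T hba hca with hbc | h
        swap
        · exact hcb h
        have hbne : b ≠ c := fun he => hcb (he ▸ ArtAux.anc_refl T c)
        obtain ⟨k, hk⟩ := hbc
        have hk0 : k ≠ 0 := by rintro rfl; simp at hk; exact hbne hk.symm
        have hbax : T.IsAncestor b x := by
          have h' : T.parent^[k-1+1] c = b := by
            rwa [Nat.sub_add_cancel (Nat.one_le_iff_ne_zero.mpr hk0)]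
          rw [Function.iterate_succ_apply, hpc] at h'
          exact ⟨k - 1, h'⟩
        have hblt : (ord b : ℕ) < (ord x : ℕ) := dfn_lt hbax hbx
        have hpa : T.parent a ≠ b := by
          intro hpab
          have hac : a = c := by
            by_contra hac
            obtain ⟨m, hm⟩ := hca
            have hm0 : m ≠ 0 := by rintro rfl; simp at hm; exact hac hm
            have h' : T.parent^[m-1+1] a = c := by
              rwa [Nat.sub_add_cancel (Nat.one_le_iff_ne_zero.mpr hm0)]
            rw [Function.iterate_succ_apply, hpab] at h'
            exact hcb ⟨m - 1, h'⟩
          rw [hac, hpc] at hpab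
          exact hbx hpab.symm
        have hmem : highPoint G T ord c ≤ ((ord b : ℕ) : WithTop ℕ) := by
          apply Finset.min_le
          apply Finset.mem_image_of_mem
          simp only [Finset.mem_filter, Finset.mem_univ, true_and]
          exact Or.inr ⟨a, hca, hab, hba, hab.ne', hpa⟩
        have := le_trans hhp hmem
        have : (ord x : ℕ) ≤ (ord b : ℕ) := by exact_mod_cast this
        omega
    have closed : ∀ (a b : {v : Fin n | v ≠ x})
        (_ : (G.induce {v : Fin n | v ≠ x}).Walk a b),
        T.IsAncestor c a.val → T.IsAncestor c b.val := by
      intro a b p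
      induction p with
      | nil => exact id
      | @cons u d b h p ih =>
        intro hca
        exact ih (step u.val d.val h u.property d.property hca)
    obtain ⟨p⟩ := hconn.preconnected ⟨c, hcx⟩ ⟨T.root, hrx⟩
    have := closed _ _ p (ArtAux.anc_refl T c)
    have hcr : c = T.root := ArtAux.anc_root T this
    exact hx (by rw [← hpc, hcr, T.parent_root])
end
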